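/- arXiv:2503.07594 — 2 statements merged into one kernel-verified Lean document; each statement's English description precedes it below -/
import Mathlib

section
/- Let A be a symmetric real d×d matrix with μ·Id ⪯ A ⪯ L·Id for reals 0 < μ ≤ L, let 0 < γ ≤ 1/L, and let H ≥ 1 be an integer. Then the operator norm satisfies ‖ Id − (1/H) Σ_{h=0}^{H−1} (Id − γA)^{H−h−1} ‖ ≤ γ(H−1)L/2. -/
open MeasureTheory Finset

noncomputable section

namespace Scaffold

/-- Euclidean parameter space `ℝ^d`. -/
abbrev E (d : ℕ) : Type := EuclideanSpace ℝ (Fin d)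

/-- Global state: a parameter together with `N` control variates. -/
abbrev State (d N : ℕ) : Type := E d × (Fin N → E d)

variable {d N : ℕ} {Z : Type*} [MeasurableSpace Z]

/-- Local objective `f_c θ = ∫ F_c(z, θ) dν_c(z)`. -/
def fLoc (F : Fin N → Z → E d → ℝ) (ν : Fin N → Measure Z) (c : Fin N) (θ : E d) : ℝ :=
  ∫ z, F c z θ ∂(ν c)

/-- Global objective `f = (1/N) ∑ f_c`. -/
def fGlob (F : Fin N → Z → E d → ℝ) (ν : Fin N → Measure Z) (θ : E d) : ℝ :=
  (N : ℝ)⁻¹ * ∑ c, fLoc F ν c θ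

/-- One local Scaffold step `T_c(θ, ξ; z) = θ - γ(∇F_c(z, θ) + ξ)`. -/
def locStep (Fc : Z → E d → ℝ) (γ : ℝ) (θ ξ : E d) (z : Z) : E d :=
  θ - γ • (gradient (Fc z) θ + ξ)

/-- `h` local Scaffold steps `T_c^h(θ, ξ; z^{1:h})`. -/
def locIter (Fc : Z → E d → ℝ) (γ : ℝ) (ξ : E d) : (h : ℕ) → E d → (Fin h → Z) → E d
  | 0, θ, _ => θ
  | h + 1, θ, z => locStep Fc γ (locIter Fc γ ξ h θ fun i => z i.castSucc) ξ (z (Fin.last h))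

/-- `h ≤ H` local steps driven by the first `h` coordinates of `z : Fin H → Z`. -/
def locIterLE (Fc : Z → E d → ℝ) (γ : ℝ) (ξ θ : E d) {H : ℕ} (z : Fin H → Z)
    (h : ℕ) (hh : h ≤ H) : E d :=
  locIter Fc γ ξ h θ fun i => z (Fin.castLE hh i)

/-- The Scaffold map `S(θ, ξ_{1:N}; z)`. -/
def scaffoldMap (F : Fin N → Z → E d → ℝ) (γ : ℝ) (H : ℕ)
    (X : State d N) (z : Fin N → Fin H → Z) : State d N :=
  ((N : ℝ)⁻¹ • ∑ c, locIter (F c) γ (X.2 c) H X.1 (z c),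
    fun c => X.2 c + (γ * (H : ℝ))⁻¹ •
      (locIter (F c) γ (X.2 c) H X.1 (z c)
        - (N : ℝ)⁻¹ • ∑ c', locIter (F c') γ (X.2 c') H X.1 (z c')))

/-- Squared Λ-norm `‖(θ, ξ_{1:N})‖_Λ² = ‖θ‖² + (γ²H²/N) ∑ ‖ξ_c‖²`. -/
def lamNormSq (γ : ℝ) (H : ℕ) (X : State d N) : ℝ :=
  ‖X.1‖ ^ 2 + γ ^ 2 * (H : ℝ) ^ 2 / (N : ℝ) * ∑ c, ‖X.2 c‖ ^ 2

/-- Membership in the state space `𝒳`: control variates sum to zero. -/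
def mem𝒳 (X : State d N) : Prop := ∑ c, X.2 c = 0

/-- One-round noise law `𝔪 = ⊗_c ν_c^{⊗H}`. -/
def noiseLaw (ν : Fin N → Measure Z) (H : ℕ) : Measure (Fin N → Fin H → Z) :=
  Measure.pi fun c => Measure.pi fun _ : Fin H => ν c

/-- `π` is a stationary distribution of Scaffold. -/
def IsStationary (F : Fin N → Z → E d → ℝ) (ν : Fin N → Measure Z) (γ : ℝ) (H : ℕ)
    (π : Measure (State d N)) : Prop :=
  ∀ φ : State d N → ℝ, Measurable φ → (∃ C, ∀ X, |φ X| ≤ C) →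
    ∫ X, φ X ∂π = ∫ X, (∫ z, φ (scaffoldMap F γ H X z) ∂(noiseLaw ν H)) ∂π

/-- Optimal control variate `ξ*_c = -∇f_c(θ*)`. -/
def xiStar (F : Fin N → Z → E d → ℝ) (ν : Fin N → Measure Z) (θstar : E d) (c : Fin N) : E d :=
  -gradient (fLoc F ν c) θstar

/-- Optimal state `X* = (θ*, ξ*_1, …, ξ*_N)`. -/
def Xopt (F : Fin N → Z → E d → ℝ) (ν : Fin N → Measure Z) (θstar : E d) : State d N :=
  (θstar, fun c => xiStar F ν θstar c)

/-- `T` rounds of Scaffold started from `X`. -/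
def iterMap (F : Fin N → Z → E d → ℝ) (γ : ℝ) (H : ℕ) :
    (T : ℕ) → State d N → (Fin T → Fin N → Fin H → Z) → State d N
  | 0, X, _ => X
  | T + 1, X, zs =>
      scaffoldMap F γ H (iterMap F γ H T X fun i => zs i.castSucc) (zs (Fin.last T))

/-- Law of the iterate `X^t` when `X⁰ ∼ ρ`, independent of the i.i.d. noise. -/
def lawAt (F : Fin N → Z → E d → ℝ) (ν : Fin N → Measure Z) (γ : ℝ) (H : ℕ)
    (ρ : Measure (State d N)) (t : ℕ) : Measure (State d N) :=
  Measure.map (fun p : State d N × (Fin t → Fin N → Fin H → Z) => iterMap F γ H t p.1 p.2)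
    (ρ.prod (Measure.pi fun _ : Fin t => noiseLaw ν H))

/-- Squared 2-Wasserstein distance for the Λ-norm. -/
def W2sq (γ : ℝ) (H : ℕ) (ρ₁ ρ₂ : Measure (State d N)) : ℝ :=
  sInf {r : ℝ | ∃ ξ : Measure (State d N × State d N), IsProbabilityMeasure ξ ∧
    ξ.map Prod.fst = ρ₁ ∧ ξ.map Prod.snd = ρ₂ ∧
    r = ∫ p, lamNormSq γ H (p.1 - p.2) ∂ξ}

/-- Regularity and well-posedness assumptions from the context: `ν_c` are probability
measures, `F_c` and `∇F_c` are jointly measurable, integrable in `z`, the gradient of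
`f_c` is obtained by differentiation under the integral, and `θ*` is the unique minimizer
of `f` with `∇f(θ*) = 0`. -/
def Setup (F : Fin N → Z → E d → ℝ) (ν : Fin N → Measure Z) (θstar : E d) : Prop :=
  (∀ c, IsProbabilityMeasure (ν c)) ∧
  (∀ c, Measurable (Function.uncurry (F c))) ∧
  (∀ c, Measurable fun p : Z × E d => gradient (F c p.1) p.2) ∧
  (∀ c θ, Integrable (fun z => F c z θ) (ν c)) ∧
  (∀ c θ, Integrable (fun z => gradient (F c z) θ) (ν c)) ∧
  (∀ c θ, gradient (fLoc F ν c) θ = ∫ z, gradient (F c z) θ ∂(ν c)) ∧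
  (∀ θ, fGlob F ν θstar ≤ fGlob F ν θ) ∧
  (∀ θ', (∀ θ, fGlob F ν θ' ≤ fGlob F ν θ) → θ' = θstar) ∧
  gradient (fGlob F ν) θstar = 0

/-- Assumption (A1): each `f_c` is twice continuously differentiable and μ-strongly convex. -/
def A1 (F : Fin N → Z → E d → ℝ) (ν : Fin N → Measure Z) (μ : ℝ) : Prop :=
  ∀ c, ContDiff ℝ 2 (fLoc F ν c) ∧ StrongConvexOn Set.univ μ (fLoc F ν c)

/-- Assumption (A2): each `F_c(z, ·)` is convex, twice differentiable, with L-Lipschitz gradient. -/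
def A2 (F : Fin N → Z → E d → ℝ) (L : ℝ) : Prop :=
  ∀ c z, ConvexOn ℝ Set.univ (F c z) ∧ Differentiable ℝ (F c z) ∧
    Differentiable ℝ (gradient (F c z)) ∧
    ∀ θ θ', ‖gradient (F c z) θ - gradient (F c z) θ'‖ ≤ L * ‖θ - θ'‖

/-- Assumption (A3): each `f_c` is thrice continuously differentiable with
`‖∇³f_c(θ)[u,u]‖ ≤ Q ‖u‖²`. -/
def A3 (F : Fin N → Z → E d → ℝ) (ν : Fin N → Measure Z) (Q : ℝ) : Prop :=
  ∀ c, ContDiff ℝ 3 (fLoc F ν c) ∧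
    ∀ θ u : E d, ‖fderiv ℝ (fderiv ℝ (gradient (fLoc F ν c))) θ u u‖ ≤ Q * ‖u‖ ^ 2

/-- Assumption (A4): heterogeneity bounds at `θ*`. -/
def A4 (F : Fin N → Z → E d → ℝ) (ν : Fin N → Measure Z) (θstar : E d) (ζ₁ ζ₂ : ℝ) : Prop :=
  ((N : ℝ)⁻¹ * ∑ c, ‖gradient (fLoc F ν c) θstar - gradient (fGlob F ν) θstar‖ ^ 2 ≤ ζ₁ ^ 2) ∧
  ((N : ℝ)⁻¹ * ∑ c,
      ‖fderiv ℝ (gradient (fLoc F ν c)) θstar - fderiv ℝ (gradient (fGlob F ν)) θstar‖ ^ 2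
        ≤ ζ₂ ^ 2)

/-- Assumption (A5): moment bounds on the gradient noise, for `p ∈ {1,2,3}`. -/
def A5 (F : Fin N → Z → E d → ℝ) (ν : Fin N → Measure Z) (θstar : E d) (σstar β : ℝ) : Prop :=
  ∀ c θ, ∀ p : ℕ, p ∈ ({1, 2, 3} : Set ℕ) →
    (∫ z, ‖gradient (F c z) θ - gradient (fLoc F ν c) θ‖ ^ (2 * p) ∂(ν c)) ^ ((p : ℝ)⁻¹)
      ≤ σstar ^ 2 + β * ‖θ - θstar‖ ^ 2

/-- The contraction operator `B_c = Id - γ ∇²f_c(θ*)`. -/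
def Bmat (F : Fin N → Z → E d → ℝ) (ν : Fin N → Measure Z) (γ : ℝ) (θstar : E d)
    (c : Fin N) : E d →L[ℝ] E d :=
  ContinuousLinearMap.id ℝ (E d) - γ • fderiv ℝ (gradient (fLoc F ν c)) θstar

/-- Taylor remainder
`R_c(θ, ξ_c; z^{1:H}) = ∑_{h<H} B_c^{H-h-1} ∫₀¹ (1-t) ∇³f_c(θ* + t(T^h-θ*))[T^h-θ*, T^h-θ*] dt`. -/
def taylorRem (F : Fin N → Z → E d → ℝ) (ν : Fin N → Measure Z) (γ : ℝ) (θstar : E d)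
    (c : Fin N) {H : ℕ} (θ ξ : E d) (z : Fin H → Z) : E d :=
  ∑ h : Fin H,
    (Bmat F ν γ θstar c ^ (H - (h : ℕ) - 1))
      (∫ t in (0 : ℝ)..1, (1 - t) •
        fderiv ℝ (fderiv ℝ (gradient (fLoc F ν c)))
          (θstar + t • (locIterLE (F c) γ ξ θ z (h : ℕ) h.isLt.le - θstar))
          (locIterLE (F c) γ ξ θ z (h : ℕ) h.isLt.le - θstar)
          (locIterLE (F c) γ ξ θ z (h : ℕ) h.isLt.le - θstar))

/-- Operator norm of a real `n × n` matrix induced by the Euclidean norm. -/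
def matOpNorm {n : ℕ} (M : Matrix (Fin n) (Fin n) ℝ) : ℝ :=
  ‖Matrix.toEuclideanCLM (𝕜 := ℝ) M‖

end Scaffold
namespace Scaffold

open scoped Matrix RealInnerProductSpace


lemma aux_smul_sub_sq {d : ℕ} (A : Matrix (Fin d) (Fin d) ℝ) (hA : A.PosSemidef) (L : ℝ)
    (hupper : (L • (1 : Matrix (Fin d) (Fin d) ℝ) - A).PosSemidef) :
    (L • A - A * A).PosSemidef := by
  obtain ⟨S, hS, rfl⟩ : ∃ S : Matrix (Fin d) (Fin d) ℝ, S.PosSemidef ∧ S * S = A :=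
    open scoped MatrixOrder in
    ⟨CFC.sqrt A, Matrix.nonneg_iff_posSemidef.mp (CFC.sqrt_nonneg A), CFC.sqrt_mul_sqrt_self A hA.nonneg⟩
  have key := hupper.mul_mul_conjTranspose_same S
  rw [hS.isHermitian.eq] at key
  have : S * (L • (1 : Matrix (Fin d) (Fin d) ℝ) - S * S) * S = L • (S * S) - S * S * (S * S) := by
    rw [Matrix.mul_sub, Matrix.sub_mul, Matrix.mul_smul, Matrix.smul_mul, Matrix.mul_one]
    noncomm_ring
  rwa [this] at key

lemma aux_gauss (H : ℕ) : ∑ k ∈ Finset.range H, (k : ℝ) = (H : ℝ) * ((H : ℝ) - 1) / 2 := by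
  induction H with
  | zero => simp
  | succ n ih => rw [Finset.sum_range_succ, ih]; push_cast; ring

lemma aux_psd_inner {d : ℕ} {P : Matrix (Fin d) (Fin d) ℝ} (hP : P.PosSemidef)
    (x : EuclideanSpace ℝ (Fin d)) : 0 ≤ ⟪(Matrix.toEuclideanCLM (𝕜 := ℝ) P) x, x⟫ := by
  have h := hP.dotProduct_mulVec_nonneg (WithLp.ofLp x)
  rw [real_inner_comm, Matrix.inner_toEuclideanCLM]
  simpa using h

set_option maxHeartbeats 1000000 in
set_option synthInstance.maxHeartbeats 400000 in
/-- Lemma: bound on `Id − (1/H) ∑_{h<H} (Id − γA)^{H−h−1}`. -/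
theorem shifted_matrix_average_bound
    {d : ℕ} (hd : 1 ≤ d) (A : Matrix (Fin d) (Fin d) ℝ) (μ L γ : ℝ) (H : ℕ)
    (hμ : 0 < μ) (hμL : μ ≤ L) (hγ : 0 < γ) (hγL : γ ≤ 1 / L) (hH : 1 ≤ H)
    (hsymm : A.IsSymm)
    (hlower : (A - μ • (1 : Matrix (Fin d) (Fin d) ℝ)).PosSemidef)
    (hupper : (L • (1 : Matrix (Fin d) (Fin d) ℝ) - A).PosSemidef) :
    matOpNorm ((1 : Matrix (Fin d) (Fin d) ℝ)
        - (H : ℝ)⁻¹ • ∑ h ∈ Finset.range H, ((1 : Matrix (Fin d) (Fin d) ℝ) - γ • A) ^ (H - h - 1))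
      ≤ γ * ((H : ℝ) - 1) * L / 2 := by
  unfold matOpNorm
  have hL : 0 < L := lt_of_lt_of_le hμ hμL
  have hγL1 : γ * L ≤ 1 := by
    rw [le_div_iff₀ hL] at hγL; linarith
  have hA : A.PosSemidef := by
    have h1 : (μ • (1 : Matrix (Fin d) (Fin d) ℝ)).PosSemidef := by
      have : μ • (1 : Matrix (Fin d) (Fin d) ℝ) = Matrix.diagonal (fun _ => μ) := by
        rw [Matrix.smul_one_eq_diagonal]
      rw [this]
      exact Matrix.PosSemidef.diagonal fun _ => hμ.le
    simpa using hlower.add h1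
  set Φ := Matrix.toEuclideanCLM (𝕜 := ℝ) (n := Fin d) with hΦ
  set T := Φ A with hT
  have hTsa : IsSelfAdjoint T := by
    rw [IsSelfAdjoint, ← map_star]
    exact congrArg _ hA.isHermitian
  -- key quadratic inequality
  have fact2 : ∀ x : EuclideanSpace ℝ (Fin d), ‖T x‖ ^ 2 ≤ L * ⟪T x, x⟫ := by
    intro x
    have h := aux_psd_inner (aux_smul_sub_sq A hA L hupper) x
    rw [map_sub, _root_.map_smul, map_mul] at h
    simp only [ContinuousLinearMap.sub_apply, ContinuousLinearMap.smul_apply,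
      ContinuousLinearMap.mul_apply, inner_sub_left, inner_smul_left, RCLike.conj_to_real] at h
    have h2 : ⟪T (T x), x⟫ = ⟪T x, T x⟫ := hTsa.isSymmetric (T x) x
    rw [h2, real_inner_self_eq_norm_sq] at h
    linarith
  have factT : ∀ x : EuclideanSpace ℝ (Fin d), 0 ≤ ⟪T x, x⟫ := fun x => aux_psd_inner hA x
  -- set B and S
  set B : Matrix (Fin d) (Fin d) ℝ := 1 - γ • A with hB
  set S := Φ B with hSdef
  have hSval : S = 1 - γ • T := by rw [hSdef, hB, map_sub, map_one, _root_.map_smul]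
  have hSnorm : ‖S‖ ≤ 1 := by
    refine ContinuousLinearMap.opNorm_le_bound _ zero_le_one fun x => ?_
    rw [one_mul]
    have e : S x = x - γ • T x := by rw [hSval]; simp
    have h2 : ‖x - γ • T x‖ ^ 2 = ‖x‖ ^ 2 - 2 * ⟪x, γ • T x⟫ + ‖γ • T x‖ ^ 2 :=
      norm_sub_sq_real x (γ • T x)
    rw [real_inner_smul_right, norm_smul, mul_pow] at h2
    have h3 := fact2 x
    have h4 := factT x
    have h5 : ⟪x, T x⟫ = ⟪T x, x⟫ := real_inner_comm _ _
    have habs : ‖γ‖ = γ := by rw [Real.norm_eq_abs]; exact abs_of_pos hγ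
    rw [h5, habs] at h2
    have hsq : ‖x - γ • T x‖ ^ 2 ≤ ‖x‖ ^ 2 := by
      nlinarith [h2, h4, mul_le_mul_of_nonneg_left h3 (sq_nonneg γ),
        mul_nonneg (mul_nonneg (by linarith : (0:ℝ) ≤ 1 - γ * L) hγ.le) h4]
    rw [e]
    nlinarith [hsq, norm_nonneg (x - γ • T x), norm_nonneg x]
  have hpow : ∀ k : ℕ, ‖S ^ k‖ ≤ 1 := by
    intro k
    induction k with
    | zero => rw [pow_zero, ContinuousLinearMap.one_def]; exact ContinuousLinearMap.norm_id_le
    | succ n ih =>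
        calc ‖S ^ (n + 1)‖ = ‖S ^ n * S‖ := by rw [pow_succ]
        _ ≤ ‖S ^ n‖ * ‖S‖ := norm_mul_le _ _
        _ ≤ 1 * 1 := mul_le_mul ih hSnorm (norm_nonneg _) zero_le_one
        _ = 1 := one_mul 1
  have hTnorm : ‖T‖ ≤ L := by
    refine ContinuousLinearMap.opNorm_le_bound _ hL.le fun x => ?_
    have h1 := fact2 x
    have h2 : ⟪T x, x⟫ ≤ ‖T x‖ * ‖x‖ := real_inner_le_norm _ _
    rcases eq_or_lt_of_le (norm_nonneg (T x)) with h0 | h0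
    · rw [← h0]; positivity
    · refine le_of_mul_le_mul_right ?_ h0
      have h3 : ‖T x‖ ^ 2 ≤ L * (‖T x‖ * ‖x‖) :=
        h1.trans (mul_le_mul_of_nonneg_left h2 hL.le)
      nlinarith [h3]
  have honemS : ‖(1 : EuclideanSpace ℝ (Fin d) →L[ℝ] EuclideanSpace ℝ (Fin d)) - S‖ ≤ γ * L := by
    have h0 : (1 : EuclideanSpace ℝ (Fin d) →L[ℝ] EuclideanSpace ℝ (Fin d)) - S = γ • T := by
      rw [hSval]; exact sub_sub_cancel 1 (γ • T)
    rw [h0]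
    refine (ContinuousLinearMap.opNorm_smul_le γ T).trans ?_
    rw [Real.norm_eq_abs, abs_of_pos hγ]
    exact mul_le_mul_of_nonneg_left hTnorm hγ.le
  have hgeom : ∀ k : ℕ, ‖(1 : EuclideanSpace ℝ (Fin d) →L[ℝ] EuclideanSpace ℝ (Fin d)) - S ^ k‖
      ≤ (k : ℝ) * (γ * L) := by
    intro k
    have g : (∑ j ∈ range k, S ^ j) * (1 - S)
        = (1 : EuclideanSpace ℝ (Fin d) →L[ℝ] EuclideanSpace ℝ (Fin d)) - S ^ k := by
      have h := geom_sum_mul S k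
      have h2 : (∑ j ∈ range k, S ^ j) * (1 - S)
          = -((∑ j ∈ range k, S ^ j) * (S - 1)) := by simp [mul_sub, mul_one, neg_sub]
      rw [h2, h, neg_sub]
    rw [← g]
    calc ‖(∑ j ∈ range k, S ^ j) * (1 - S)‖ ≤ ‖∑ j ∈ range k, S ^ j‖ * ‖1 - S‖ := norm_mul_le _ _
    _ ≤ (∑ j ∈ range k, ‖S ^ j‖) * ‖1 - S‖ :=
        mul_le_mul_of_nonneg_right (norm_sum_le _ _) (norm_nonneg _)
    _ ≤ (∑ j ∈ range k, (1 : ℝ)) * (γ * L) := by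
        refine mul_le_mul (Finset.sum_le_sum fun j _ => hpow j) honemS (norm_nonneg _) ?_
        positivity
    _ = (k : ℝ) * (γ * L) := by simp
  -- rewrite the target operator
  have hreindex : ∑ h ∈ range H, B ^ (H - h - 1) = ∑ k ∈ range H, B ^ k := by
    have := Finset.sum_range_reflect (fun k => B ^ k) H
    simpa [Nat.sub_sub, add_comm] using this
  have hmain : Φ ((1 : Matrix (Fin d) (Fin d) ℝ) - (H : ℝ)⁻¹ • ∑ h ∈ range H, B ^ (H - h - 1))
      = (H : ℝ)⁻¹ • ∑ k ∈ range H,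
          ((1 : EuclideanSpace ℝ (Fin d) →L[ℝ] EuclideanSpace ℝ (Fin d)) - S ^ k) := by
    rw [hreindex, map_sub, map_one, _root_.map_smul, map_sum]
    simp only [map_pow]
    rw [Finset.sum_sub_distrib, Finset.sum_const, Finset.card_range, smul_sub]
    have hHne : (H : ℝ) ≠ 0 := Nat.cast_ne_zero.mpr (Nat.one_le_iff_ne_zero.mp hH)
    rw [← Nat.cast_smul_eq_nsmul ℝ, smul_smul, inv_mul_cancel₀ hHne, one_smul]
  rw [hmain]
  refine (ContinuousLinearMap.opNorm_smul_le ((H:ℝ)⁻¹) _).trans ?_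
  rw [Real.norm_eq_abs, abs_of_pos (by positivity : (0:ℝ) < (H:ℝ)⁻¹)]
  have hsum : ‖∑ k ∈ range H, ((1 : EuclideanSpace ℝ (Fin d) →L[ℝ] EuclideanSpace ℝ (Fin d)) - S ^ k)‖
      ≤ ∑ k ∈ range H, (k : ℝ) * (γ * L) :=
    (norm_sum_le _ _).trans (Finset.sum_le_sum fun k _ => hgeom k)
  have hgauss := aux_gauss H
  calc (H : ℝ)⁻¹ * ‖∑ k ∈ range H, ((1 : EuclideanSpace ℝ (Fin d) →L[ℝ] EuclideanSpace ℝ (Fin d)) - S ^ k)‖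
      ≤ (H : ℝ)⁻¹ * ∑ k ∈ range H, (k : ℝ) * (γ * L) :=
        mul_le_mul_of_nonneg_left hsum (by positivity)
    _ = γ * ((H : ℝ) - 1) * L / 2 := by
        rw [← Finset.sum_mul, hgauss]
        have hHne : (H : ℝ) ≠ 0 := Nat.cast_ne_zero.mpr (Nat.one_le_iff_ne_zero.mp hH)
        field_simp

end Scaffold
end
end

section
/- Suppose each f_c is twice continuously differentiable and thrice continuously differentiable. Fix c ∈ {1,…,N}, θ, ξ_c ∈ ℝ^d and z^{1:H} = (z^1,…,z^H) ∈ Z^H. Write B_c := Id − γ∇²f_c(θ*), ξ*_c := −∇f_c(θ*), and T^h := T_c^h(θ,ξ_c;z^{1:h}) for h ∈ {0,…,H}. Then T^H − θ* = B_c^H (θ − θ*) − γ Σ_{h=0}^{H−1} B_c^{H−h−1} (ξ_c − ξ*_c) − γ Σ_{h=0}^{H−1} B_c^{H−h−1} ∫₀¹ (1−t) ∇³f_c(θ* + t(T^h − θ*))[T^h − θ*, T^h − θ*] dt − γ Σ_{h=0}^{H−1} B_c^{H−h−1} ( ∇_θF_c(z^{h+1}, T^h) − ∇f_c(T^h) ).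 -/
open MeasureTheory Finset

noncomputable section

namespace Scaffold

lemma taylor_two {d : ℕ} {g : E d → E d} (hg : ContDiff ℝ 2 g) (a u : E d) :
    g (a + u) = g a + fderiv ℝ g a u
      + ∫ t in (0:ℝ)..1, (1 - t) • fderiv ℝ (fderiv ℝ g) (a + t • u) u u := by
  have hg1 : ContDiff ℝ 1 (fderiv ℝ g) := hg.fderiv_right (le_refl 2)
  have hD2cont : Continuous (fderiv ℝ (fderiv ℝ g)) :=
    (hg1.fderiv_right (m := 0) (by norm_num)).continuous
  set ψ : ℝ → E d := fun t => g (a + t • u) + (1 - t) • (fderiv ℝ g (a + t • u)) u with hψ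
  have hc : ∀ t : ℝ, HasDerivAt (fun s : ℝ => a + s • u) u t := fun t => by
    simpa using ((hasDerivAt_id t).smul_const u).const_add a
  have hderiv : ∀ t : ℝ, HasDerivAt ψ ((1 - t) • fderiv ℝ (fderiv ℝ g) (a + t • u) u u) t := by
    intro t
    have h1 : HasDerivAt (fun s => g (a + s • u)) (fderiv ℝ g (a + t • u) u) t :=
      ((hg.differentiable (by norm_num) (a + t • u)).hasFDerivAt).comp_hasDerivAt t (hc t)
    have h2 : HasDerivAt (fun s => fderiv ℝ g (a + s • u))
        (fderiv ℝ (fderiv ℝ g) (a + t • u) u) t :=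
      ((hg1.differentiable (by norm_num) (a + t • u)).hasFDerivAt).comp_hasDerivAt t (hc t)
    have h3 : HasDerivAt (fun s => (fderiv ℝ g (a + s • u)) u)
        (fderiv ℝ (fderiv ℝ g) (a + t • u) u u) t :=
      ((ContinuousLinearMap.apply ℝ (E d) u).hasFDerivAt).comp_hasDerivAt t h2
    have h4 : HasDerivAt (fun s : ℝ => 1 - s) (-1) t := by
      simpa using (hasDerivAt_id t).const_sub 1
    have h5 := h4.smul h3
    have h6 := h1.add h5
    refine HasDerivAt.congr_deriv h6 ?_
    module
  have hcont : Continuous fun t : ℝ => (1 - t) • fderiv ℝ (fderiv ℝ g) (a + t • u) u u := by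
    refine Continuous.smul (f := fun t : ℝ => 1 - t)
      (g := fun t => fderiv ℝ (fderiv ℝ g) (a + t • u) u u) (continuous_const.sub continuous_id) ?_
    exact ((hD2cont.comp (by continuity)).clm_apply continuous_const).clm_apply continuous_const
  have hFTC := intervalIntegral.integral_eq_sub_of_hasDerivAt
      (fun t _ => hderiv t) (hcont.intervalIntegrable 0 1)
  have hψ1 : ψ 1 = g (a + u) := by simp [hψ]
  have hψ0 : ψ 0 = g a + fderiv ℝ g a u := by simp [hψ]
  rw [hFTC, hψ1, hψ0]
  abel

lemma contDiff_gradient {d : ℕ} {f : E d → ℝ} (hf : ContDiff ℝ 3 f) :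
    ContDiff ℝ 2 (gradient f) := by
  have h1 : ContDiff ℝ 2 (fderiv ℝ f) := hf.fderiv_right (by norm_num)
  have h2 : gradient f = fun x => (InnerProductSpace.toDual ℝ (E d)).symm (fderiv ℝ f x) := rfl
  rw [h2]
  exact (InnerProductSpace.toDual ℝ (E d)).symm.contDiff.comp h1

lemma expansion_aux {d N : ℕ} {Z : Type*} [MeasurableSpace Z]
    (γ : ℝ) (F : Fin N → Z → E d → ℝ) (ν : Fin N → Measure Z) (θstar : E d)
    (c : Fin N) (ξc : E d)
    (hg : ContDiff ℝ 2 (gradient (fLoc F ν c))) :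
    ∀ (H : ℕ) (θ : E d) (z : Fin H → Z),
      locIter (F c) γ ξc H θ z - θstar
        = (Bmat F ν γ θstar c ^ H) (θ - θstar)
          - γ • ∑ h : Fin H,
              (Bmat F ν γ θstar c ^ (H - (h : ℕ) - 1)) (ξc - xiStar F ν θstar c)
          - γ • taylorRem F ν γ θstar c θ ξc z
          - γ • ∑ h : Fin H,
              (Bmat F ν γ θstar c ^ (H - (h : ℕ) - 1))
                (gradient (F c (z h)) (locIterLE (F c) γ ξc θ z (h : ℕ) h.isLt.le)
                  - gradient (fLoc F ν c) (locIterLE (F c) γ ξc θ z (h : ℕ) h.isLt.le)) := by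
  set g := gradient (fLoc F ν c) with hgdef
  set B := Bmat F ν γ θstar c with hBdef
  set Rf : E d → E d := fun x =>
    ∫ t in (0:ℝ)..1, (1 - t) •
      fderiv ℝ (fderiv ℝ g) (θstar + t • (x - θstar)) (x - θstar) (x - θstar) with hRf
  have key : ∀ (x : E d) (zz : Z),
      locStep (F c) γ x ξc zz - θstar
        = B (x - θstar) - γ • (ξc - xiStar F ν θstar c) - γ • Rf x
          - γ • (gradient (F c zz) x - g x) := by
    intro x zz
    have ht := taylor_two hg θstar (x - θstar)
    rw [add_sub_cancel] at ht
    have hB : B (x - θstar) = (x - θstar) - γ • fderiv ℝ g θstar (x - θstar) := by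
      simp [hBdef, Bmat, ContinuousLinearMap.sub_apply, hgdef]
    simp only [locStep, hB, xiStar, sub_neg_eq_add, hRf]
    rw [ht]
    simp only [← hgdef]
    module
  intro H
  induction H with
  | zero =>
    intro θ z
    simp [locIter, taylorRem, ← hBdef]
  | succ n ih =>
    intro θ z
    set zp : Fin n → Z := fun i => z i.castSucc with hzp
    set T : E d := locIter (F c) γ ξc n θ zp with hT
    have hz : locIter (F c) γ ξc (n + 1) θ z = locStep (F c) γ T ξc (z (Fin.last n)) := rfl
    have hstep : ∀ w : Fin (n + 1) → E d,
        ∑ h : Fin (n + 1), (B ^ ((n + 1) - (h : ℕ) - 1)) (w h)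
          = B (∑ h : Fin n, (B ^ (n - (h : ℕ) - 1)) (w h.castSucc)) + w (Fin.last n) := by
      intro w
      rw [Fin.sum_univ_castSucc, map_sum]
      congr 1
      · refine Finset.sum_congr rfl fun h _ => ?_
        have hlt := h.isLt
        have he : (n + 1) - ((h.castSucc : Fin (n+1)) : ℕ) - 1 = (n - (h : ℕ) - 1) + 1 := by
          simp only [Fin.coe_castSucc]; omega
        rw [he, pow_succ']
        rfl
      · simp
    -- locIterLE compatibility
    have hLEc : ∀ h : Fin n,
        locIterLE (F c) γ ξc θ z ((h.castSucc : Fin (n+1)) : ℕ) (h.castSucc).isLt.le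
          = locIterLE (F c) γ ξc θ zp (h : ℕ) h.isLt.le := fun h => rfl
    have hLEl : locIterLE (F c) γ ξc θ z ((Fin.last n : Fin (n+1)) : ℕ) (Fin.last n).isLt.le
        = T := rfl
    have hTay : taylorRem F ν γ θstar c θ ξc z
        = B (taylorRem F ν γ θstar c θ ξc zp) + Rf T := by
      simp only [taylorRem, ← hBdef, ← hgdef]
      rw [hstep]
      rfl
    have hXi : ∑ h : Fin (n + 1), (B ^ ((n + 1) - (h : ℕ) - 1)) (ξc - xiStar F ν θstar c)
        = B (∑ h : Fin n, (B ^ (n - (h : ℕ) - 1)) (ξc - xiStar F ν θstar c))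
          + (ξc - xiStar F ν θstar c) := hstep _
    have hNoi : ∑ h : Fin (n + 1), (B ^ ((n + 1) - (h : ℕ) - 1))
          (gradient (F c (z h)) (locIterLE (F c) γ ξc θ z (h : ℕ) h.isLt.le)
            - gradient (fLoc F ν c) (locIterLE (F c) γ ξc θ z (h : ℕ) h.isLt.le))
        = B (∑ h : Fin n, (B ^ (n - (h : ℕ) - 1))
            (gradient (F c (zp h)) (locIterLE (F c) γ ξc θ zp (h : ℕ) h.isLt.le)
              - gradient (fLoc F ν c) (locIterLE (F c) γ ξc θ zp (h : ℕ) h.isLt.le)))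
          + (gradient (F c (z (Fin.last n))) T - g T) := by
      rw [hstep]
      rfl
    rw [hz, key T (z (Fin.last n)), ih θ zp, hTay, hXi, hNoi]
    have hpow : (B ^ (n + 1)) (θ - θstar) = B ((B ^ n) (θ - θstar)) := by
      rw [pow_succ']; rfl
    rw [hpow]
    simp only [← hgdef]
    simp only [map_sub, _root_.map_smul]
    module

end Scaffold
namespace Scaffold

/-- Lemma: exact expansion of the local updates.
`T^H − θ* = B_c^H (θ−θ*) − γ Σ_h B_c^{H−h−1} (ξ_c−ξ*_c) − γ·(Taylor remainder)
− γ Σ_h B_c^{H−h−1} (∇F_c(z^{h+1}, T^h) − ∇f_c(T^h))`. -/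
theorem scaffold_local_update_expansion
    {d N H : ℕ} {Z : Type*} [MeasurableSpace Z]
    (hd : 1 ≤ d) (hN : 1 ≤ N) (hH : 1 ≤ H)
    (γ : ℝ) (hγ : 0 < γ)
    (F : Fin N → Z → E d → ℝ) (ν : Fin N → Measure Z) (θstar : E d)
    (hν : ∀ c, IsProbabilityMeasure (ν c))
    (hFmeas : ∀ c, Measurable (Function.uncurry (F c)))
    (hGmeas : ∀ c, Measurable fun p : Z × E d => gradient (F c p.1) p.2)
    (hFint : ∀ c θ, Integrable (fun z => F c z θ) (ν c))
    (hGint : ∀ c θ, Integrable (fun z => gradient (F c z) θ) (ν c))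
    (hswap : ∀ c θ, gradient (fLoc F ν c) θ = ∫ z, gradient (F c z) θ ∂(ν c))
    (hFdiff : ∀ c z, Differentiable ℝ (F c z))
    (hcrit : gradient (fGlob F ν) θstar = 0)
    (hsmooth : ∀ c, ContDiff ℝ 2 (fLoc F ν c) ∧ ContDiff ℝ 3 (fLoc F ν c)) :
    ∀ (c : Fin N) (θ ξc : E d) (z : Fin H → Z),
      locIter (F c) γ ξc H θ z - θstar
        = (Bmat F ν γ θstar c ^ H) (θ - θstar)
          - γ • ∑ h : Fin H,
              (Bmat F ν γ θstar c ^ (H - (h : ℕ) - 1)) (ξc - xiStar F ν θstar c)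
          - γ • taylorRem F ν γ θstar c θ ξc z
          - γ • ∑ h : Fin H,
              (Bmat F ν γ θstar c ^ (H - (h : ℕ) - 1))
                (gradient (F c (z h)) (locIterLE (F c) γ ξc θ z (h : ℕ) h.isLt.le)
                  - gradient (fLoc F ν c) (locIterLE (F c) γ ξc θ z (h : ℕ) h.isLt.le)) := by
  intro c θ ξc z
  exact expansion_aux γ F ν θstar c ξc (contDiff_gradient (hsmooth c).2) H θ z

end Scaffold
end
end
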